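/- Let n = 4. The element X_{(6,2)} of B_{4,ℤ} does not lie in the right ℤ[S_8]-submodule of B_{4,ℤ} generated by X_{(4,4)}; that is, there is no z ∈ ℤ[S_8] with X_{(4,4)} ∗ z = X_{(6,2)} (the action ∗ being extended ℤ-linearly to ℤ[S_8]). -/

import Mathlib

open scoped BigOperators

/-- Brauer `n`-diagrams: fixed-point-free involutions of `{0, ..., 2n-1}`
(the point `k` stands for the vertex labeled `k+1`). -/
def BD (n : ℕ) : Type := {D : Equiv.Perm (Fin (2*n)) // D * D = 1 ∧ ∀ x, D x ≠ x}

instance (n : ℕ) : Finite (BD n) := Subtype.finite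

noncomputable instance (n : ℕ) : Fintype (BD n) := Fintype.ofFinite _

noncomputable instance (n : ℕ) : DecidableEq (BD n) := Classical.decEq _

/-- The conjugation (right) action of `S_{2n}` on Brauer diagrams: `D ∗ w = w⁻¹ D w`. -/
def conjBD {n : ℕ} (D : BD n) (w : Equiv.Perm (Fin (2*n))) : BD n :=
  ⟨w⁻¹ * D.1 * w,
   by
     have h := D.2.1
     have h2 : (w⁻¹ * D.1 * w) * (w⁻¹ * D.1 * w) = w⁻¹ * (D.1 * D.1) * w := by group
     rw [h2, h, mul_one, inv_mul_cancel],
   fun x hx => D.2.2 (w x) (by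
     have h1 : (w⁻¹ * D.1 * w) x = w⁻¹ (D.1 (w x)) := rfl
     rw [h1] at hx
     have h2 := congrArg w hx
     simpa using h2)⟩

/-- The right action of a permutation on the free module spanned by Brauer diagrams. -/
noncomputable def astw {n : ℕ} {R : Type*} [AddCommMonoid R]
    (v : BD n →₀ R) (w : Equiv.Perm (Fin (2*n))) : BD n →₀ R :=
  Finsupp.mapDomain (fun D => conjBD D w) v

/-- The right action extended linearly to the group algebra `R[S_{2n}]`. -/
noncomputable def astMA {n : ℕ} {R : Type*} [CommRing R]
    (v : BD n →₀ R) (z : MonoidAlgebra R (Equiv.Perm (Fin (2*n)))) : BD n →₀ R :=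
  z.coeff.sum fun w c => c • astw v w

open Classical in
/-- Sum of all Brauer diagrams satisfying a predicate. -/
noncomputable def indSum (R : Type*) [CommRing R] {n : ℕ} (P : BD n → Prop) : BD n →₀ R :=
  ∑ D : BD n, if P D then Finsupp.single D 1 else 0

open Classical in
noncomputable def sumPerm {n : ℕ} {M : Type*} [AddCommMonoid M]
    (P : Equiv.Perm (Fin (2*n)) → Prop) (F : Equiv.Perm (Fin (2*n)) → M) : M :=
  ∑ g : Equiv.Perm (Fin (2*n)), if P g then F g else 0

/-- `psum lam i = lam 0 + ... + lam (i-1)`, the partial sums of a composition. -/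
def psum (lam : ℕ → ℕ) (i : ℕ) : ℕ := ∑ k ∈ Finset.range i, lam k

/-- `lam` is a partition of `2n` (0-indexed parts). -/
def IsPartitionOf2n (n : ℕ) (lam : ℕ → ℕ) : Prop :=
  (∀ i j, i ≤ j → lam j ≤ lam i) ∧ (∀ i, 2*n ≤ i → lam i = 0) ∧ psum lam (2*n) = 2*n

/-- `lam ∈ 2P_n`: a partition of `2n` all of whose parts are even. -/
def IsEvenPartition (n : ℕ) (lam : ℕ → ℕ) : Prop :=
  IsPartitionOf2n n lam ∧ ∀ i, Even (lam i)

/-- Dominance order `lam ⊴ nu`. -/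
def Dominates (lam nu : ℕ → ℕ) : Prop := ∀ k, psum lam k ≤ psum nu k

/-- `D` maps each block `B_i = {psum lam i, ..., psum lam (i+1) - 1}` to itself. -/
def PreservesBlocks (n : ℕ) (lam : ℕ → ℕ) (D : BD n) : Prop :=
  ∀ (p : Fin (2*n)) (i : ℕ), psum lam i ≤ (p : ℕ) → (p : ℕ) < psum lam (i+1) →
    psum lam i ≤ ((D.1 p : Fin (2*n)) : ℕ) ∧ ((D.1 p : Fin (2*n)) : ℕ) < psum lam (i+1)

/-- `X_lam`: the sum of all Brauer diagrams preserving the blocks of `lam`. -/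
noncomputable def Xelt (R : Type*) [CommRing R] (n : ℕ) (lam : ℕ → ℕ) : BD n →₀ R :=
  indSum R (PreservesBlocks n lam)

/-- `g` encodes a standard `nu`-tableau `t` via `t(c) = g(pos c) + 1`, where `pos c`
is the (0-indexed) row-reading position of the node `c`; i.e. `g = d(t)`. -/
def IsStdOf (n : ℕ) (nu : ℕ → ℕ) (g : Equiv.Perm (Fin (2*n))) : Prop :=
  (∀ (i j : ℕ) (a b : Fin (2*n)), (a : ℕ) = psum nu i + j → (b : ℕ) = psum nu i + j + 1 →
      j + 1 < nu i → ((g a : Fin (2*n)) : ℕ) < ((g b : Fin (2*n)) : ℕ)) ∧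
  (∀ (i j : ℕ) (a b : Fin (2*n)), (a : ℕ) = psum nu i + j → (b : ℕ) = psum nu (i+1) + j →
      j < nu (i+1) → ((g a : Fin (2*n)) : ℕ) < ((g b : Fin (2*n)) : ℕ))

/-- `X_{nu,t} = X_nu ∗ d(t)`. -/
noncomputable def XNuT (R : Type*) [CommRing R] (n : ℕ) (nu : ℕ → ℕ)
    (g : Equiv.Perm (Fin (2*n))) : BD n →₀ R :=
  astw (Xelt R n nu) g

/-- `M_R^lam`: the span of the `X_{nu,t}` for `nu ∈ 2P_n` with `lam ⊴ nu` and `t` standard. -/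
noncomputable def Mspan (R : Type*) [CommRing R] (n : ℕ) (lam : ℕ → ℕ) :
    Submodule R (BD n →₀ R) :=
  Submodule.span R {v | ∃ nu g, IsEvenPartition n nu ∧ Dominates lam nu ∧
    IsStdOf n nu g ∧ v = XNuT R n nu g}

/-- `M_R^{▷lam}`: the span of the `X_{nu,t}` for `nu ∈ 2P_n` with `lam ⊴ nu`, `lam ≠ nu`. -/
noncomputable def MspanStrict (R : Type*) [CommRing R] (n : ℕ) (lam : ℕ → ℕ) :
    Submodule R (BD n →₀ R) :=
  Submodule.span R {v | ∃ nu g, IsEvenPartition n nu ∧ Dominates lam nu ∧ lam ≠ nu ∧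
    IsStdOf n nu g ∧ v = XNuT R n nu g}

/-- The (0-indexed) row of `t^mu` containing the (0-indexed) entry `a`. -/
def rowOf (n : ℕ) (mu : ℕ → ℕ) (a : ℕ) : ℕ :=
  ((Finset.range (2*n)).filter (fun i => psum mu (i+1) ≤ a)).card

/-- The `j`-th part (0-indexed) of the conjugate partition of `mu`. -/
def conjPart (n : ℕ) (mu : ℕ → ℕ) (j : ℕ) : ℕ :=
  ((Finset.range (2*n)).filter (fun i => j < mu i)).card

/-- The conjugate partition. -/
def conjFun (n : ℕ) (mu : ℕ → ℕ) : ℕ → ℕ := fun j => conjPart n mu j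

/-- The (0-indexed) column-reading position of the node `(i,j)` of `mu`. -/
def colpos (n : ℕ) (mu : ℕ → ℕ) (i j : ℕ) : ℕ := (∑ k ∈ Finset.range j, conjPart n mu k) + i

/-- `w = w_mu`, the permutation sending the entry of `t^mu` at each node to the entry of
`t_mu` (column-reading tableau) at that node. -/
def IsColReadingPerm (n : ℕ) (mu : ℕ → ℕ) (w : Equiv.Perm (Fin (2*n))) : Prop :=
  ∀ (i j : ℕ) (a b : Fin (2*n)), (a : ℕ) = psum mu i + j → (b : ℕ) = colpos n mu i j →
    j < mu i → w a = b

/-- Membership in the Young subgroup `S_mu` (row stabilizer of `t^mu`). -/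
def InYoung (n : ℕ) (mu : ℕ → ℕ) (w : Equiv.Perm (Fin (2*n))) : Prop :=
  ∀ p : Fin (2*n), rowOf n mu ((w p : Fin (2*n)) : ℕ) = rowOf n mu (p : ℕ)

/-- `x_mu = Σ_{w ∈ S_mu} w`. -/
noncomputable def xElt (R : Type*) [CommRing R] (n : ℕ) (mu : ℕ → ℕ) :
    MonoidAlgebra R (Equiv.Perm (Fin (2*n))) :=
  sumPerm (InYoung n mu) (fun w => MonoidAlgebra.single w 1)

/-- `y_mu = Σ_{w ∈ S_mu} sgn(w)·w`. -/
noncomputable def yElt (R : Type*) [CommRing R] (n : ℕ) (mu : ℕ → ℕ) :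
    MonoidAlgebra R (Equiv.Perm (Fin (2*n))) :=
  sumPerm (InYoung n mu) (fun w => MonoidAlgebra.single w (((Equiv.Perm.sign w : ℤˣ) : ℤ) : R))

/-- The generator `y_{mu'} · w_{mu'} · x_mu` of the Specht module, where `wc = w_{mu'}`. -/
noncomputable def spechtGen (R : Type*) [CommRing R] (n : ℕ) (mu : ℕ → ℕ)
    (wc : Equiv.Perm (Fin (2*n))) : MonoidAlgebra R (Equiv.Perm (Fin (2*n))) :=
  yElt R n (conjFun n mu) * MonoidAlgebra.single wc 1 * xElt R n mu

/-- The Specht module `S^mu = y_{mu'} w_{mu'} x_mu · R[S_{2n}]` as a right ideal. -/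
noncomputable def SpechtMod (R : Type*) [CommRing R] (n : ℕ) (mu : ℕ → ℕ)
    (wc : Equiv.Perm (Fin (2*n))) : Submodule R (MonoidAlgebra R (Equiv.Perm (Fin (2*n)))) :=
  LinearMap.range (LinearMap.mulLeft R (spechtGen R n mu wc))

/-- Right multiplication by `w` on the (integral) Specht module. -/
noncomputable def spechtRm (n : ℕ) (mu : ℕ → ℕ) (wc w : Equiv.Perm (Fin (2*n))) :
    ↥(SpechtMod ℤ n mu wc) →ₗ[ℤ] ↥(SpechtMod ℤ n mu wc) :=
  LinearMap.restrict (LinearMap.mulRight ℤ (MonoidAlgebra.single w 1))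
    (by
      rintro x ⟨u, rfl⟩
      exact ⟨u * MonoidAlgebra.single w 1, by
        simp only [LinearMap.mulLeft_apply, LinearMap.mulRight_apply, mul_assoc]⟩)

/-- Base change `B_{n,ℤ} → B_{n,R}`. -/
noncomputable def bcast (R : Type*) [CommRing R] (n : ℕ) : (BD n →₀ ℤ) →ₗ[ℤ] (BD n →₀ R) :=
  Finsupp.mapRange.linearMap (Int.castAddHom R).toIntLinearMap

/-- The canonical map `R ⊗_ℤ M_ℤ^lam → B_{n,R}` (with image `M_R^lam`). -/
noncomputable def canMap (R : Type*) [CommRing R] (n : ℕ) (lam : ℕ → ℕ) :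
    TensorProduct ℤ R ↥(Mspan ℤ n lam) →ₗ[ℤ] (BD n →₀ R) :=
  TensorProduct.lift
    (LinearMap.mk₂ ℤ (fun (r : R) (x : ↥(Mspan ℤ n lam)) => r • bcast R n (x : BD n →₀ ℤ))
      (fun r r' x => by rw [add_smul])
      (fun c r x => by rw [smul_assoc])
      (fun r x y => by rw [Submodule.coe_add, map_add, smul_add])
      (fun c r x => by rw [Submodule.coe_smul, map_smul, smul_comm]))

/-- `D` as a function on natural numbers (identity outside `{0,...,2n-1}`). -/
noncomputable def toFun2n {n : ℕ} (D : BD n) : ℕ → ℕ := fun a =>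
  if h : a < 2*n then ((D.1 ⟨a, h⟩ : Fin (2*n)) : ℕ) else a

/-- The sorted list of left endpoints (as 0-indexed vertex numbers) of the bottom
horizontal edges of `D`; bottom vertex `c` is the point `2c+1`. -/
noncomputable def botLeftList (n : ℕ) (D : BD n) : List ℕ :=
  ((Finset.range n).filter
    (fun c => toFun2n D (2*c+1) % 2 = 1 ∧ 2*c+1 < toFun2n D (2*c+1))).sort (· ≤ ·)

/-- The permutation `π_D` (as a function on 0-indexed vertices): vertical edges are matched
top-to-bottom, and the `j`-th top horizontal edge (ordered by left endpoints) is matched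
to the `j`-th bottom horizontal edge, left endpoint to left endpoint. -/
noncomputable def piFun (n : ℕ) (D : BD n) : ℕ → ℕ := fun u =>
  if u < n then
    if toFun2n D (2*u) % 2 = 1 then (toFun2n D (2*u) - 1)/2
    else
      let a := min u (toFun2n D (2*u) / 2)
      let j := ((Finset.range n).filter
        (fun a' => toFun2n D (2*a') % 2 = 0 ∧ a' < toFun2n D (2*a') / 2 ∧ a' < a)).card
      let c := (botLeftList n D).getD j 0
      if u < toFun2n D (2*u) / 2 then c else (toFun2n D (2*c+1) - 1)/2
  else u

/-- `sgn(π_D)`, computed via the number of inversions of `π_D` on `{0,...,n-1}`. -/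
noncomputable def signPi (n : ℕ) (D : BD n) : ℤ :=
  (-1 : ℤ) ^ (((Finset.range n ×ˢ Finset.range n).filter
    (fun p => p.1 < p.2 ∧ piFun n D p.2 < piFun n D p.1)).card)

/-- `ε_{x,y}` on 0-indexed basis labels: `1` if `y = x'` and `x < y`, `-1` if `y = x'`
and `x > y`, `0` otherwise (here `x' = 2m-1-x`, i.e. `x + y = 2m - 1`). -/
def epsN (m : ℕ) (x y : ℕ) : ℤ :=
  if x + y = 2*m - 1 then (if x < y then 1 else -1) else 0

/-- The coefficient of `v_x ⊗ v_y` in `ω = Σ_{k=1}^m (v_{k'} ⊗ v_k - v_k ⊗ v_{k'})`. -/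
def omegaN (m : ℕ) (x y : ℕ) : ℤ :=
  if x + y = 2*m - 1 then (if y < x then 1 else -1) else 0

/-- The matrix coefficient of `φ(D)` between the input basis tensor `vin` (read at the top
row) and the output basis tensor `vout` (read at the bottom row):
`sgn(π_D) · Π_{top edges (a,b)} ε_{vin a, vin b} · Π_{vertical edges (u,w)} δ_{vin u, vout w}
· Π_{bottom edges (c,d)} (coefficient of v_{vout c} ⊗ v_{vout d} in ω)`. -/
noncomputable def phiCoef (m n : ℕ) (D : BD n) (vin vout : ℕ → ℕ) : ℤ :=
  signPi n D
  * ∏ p ∈ (Finset.range n ×ˢ Finset.range n).filter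
      (fun p => p.1 < p.2 ∧ toFun2n D (2*p.1) = 2*p.2), epsN m (vin p.1) (vin p.2)
  * ∏ p ∈ (Finset.range n ×ˢ Finset.range n).filter
      (fun p => toFun2n D (2*p.1) = 2*p.2+1), (if vout p.2 = vin p.1 then 1 else 0)
  * ∏ p ∈ (Finset.range n ×ˢ Finset.range n).filter
      (fun p => p.1 < p.2 ∧ toFun2n D (2*p.1+1) = 2*p.2+1), omegaN m (vout p.1) (vout p.2)

/-- Extend `f : Fin n → Fin m` to a function `ℕ → ℕ`. -/
def liftFin {n m : ℕ} (f : Fin n → Fin m) : ℕ → ℕ := fun t =>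
  if h : t < n then ((f ⟨t, h⟩ : Fin m) : ℕ) else 0

/-- The endomorphism `φ(D)` of the `n`-tensor space `V^{⊗n}`, `dim V = 2m`, realized on the
free module with basis the functions `Fin n → Fin (2m)` (basis tensors). -/
noncomputable def phiD (K : Type*) [CommRing K] (m n : ℕ) (D : BD n) :
    ((Fin n → Fin (2*m)) →₀ K) →ₗ[K] ((Fin n → Fin (2*m)) →₀ K) :=
  Finsupp.lsum K fun vin => LinearMap.toSpanSingleton K _
    (∑ vout : Fin n → Fin (2*m),
      Finsupp.single vout ((phiCoef m n D (liftFin vin) (liftFin vout) : ℤ) : K))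

/-- The linear extension `φ : B_{n,K} → End_K(V^{⊗n})`. -/
noncomputable def phiLin (K : Type*) [CommRing K] (m n : ℕ) :
    (BD n →₀ K) →ₗ[K]
      (((Fin n → Fin (2*m)) →₀ K) →ₗ[K] ((Fin n → Fin (2*m)) →₀ K)) :=
  Finsupp.lsum K fun D => LinearMap.toSpanSingleton K _ (phiD K m n D)

/-- Membership in `BD_n(a,b)` (0-indexed vertices; top vertex `u` is the point `2u`,
bottom vertex `u` is the point `2u+1`). -/
def memBDab (n a b : ℕ) (D : BD n) : Prop :=
  if b ≤ a then
    (∀ p, ((p % 2 = 0 ∧ p < 2*a) ∨ (p % 2 = 1 ∧ p < 2*b)) →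
        ((toFun2n D p % 2 = 0 ∧ toFun2n D p < 2*a) ∨
         (toFun2n D p % 2 = 1 ∧ toFun2n D p < 2*b))) ∧
    (∀ t, b + 2*t + 1 < a → toFun2n D (2*(b+2*t)+1) = 2*(b+2*t+1)+1) ∧
    (∀ u, a ≤ u → u < n → toFun2n D (2*u) = 2*u+1)
  else
    (∀ p, ((p % 2 = 0 ∧ p < 2*a) ∨ (p % 2 = 1 ∧ p < 2*b)) →
        ((toFun2n D p % 2 = 0 ∧ toFun2n D p < 2*a) ∨
         (toFun2n D p % 2 = 1 ∧ toFun2n D p < 2*b))) ∧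
    (∀ t, a + 2*t + 1 < b → toFun2n D (2*(a+2*t)) = 2*(a+2*t+1))  ∧
    (∀ u, b ≤ u → u < n → toFun2n D (2*u) = 2*u+1)

/-- The fixed-point-free involution `γ₀ = (1 2)(3 4)⋯(2n-1 2n)` (0-indexed: `2k ↔ 2k+1`). -/
def gamma0 (n : ℕ) : BD n :=
  ⟨⟨fun p => ⟨if (p : ℕ) % 2 = 0 then (p : ℕ) + 1 else (p : ℕ) - 1, by
      rcases p with ⟨v, hv⟩; dsimp only; split <;> omega⟩,
    fun p => ⟨if (p : ℕ) % 2 = 0 then (p : ℕ) + 1 else (p : ℕ) - 1, by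
      rcases p with ⟨v, hv⟩; dsimp only; split <;> omega⟩,
    fun p => by
      rcases p with ⟨v, hv⟩
      apply Fin.ext
      dsimp only
      split_ifs <;> omega,
    fun p => by
      rcases p with ⟨v, hv⟩
      apply Fin.ext
      dsimp only
      split_ifs <;> omega⟩,
   by
     apply Equiv.ext
     intro p
     rcases p with ⟨v, hv⟩
     apply Fin.ext
     show (if (if v % 2 = 0 then v + 1 else v - 1) % 2 = 0
        then (if v % 2 = 0 then v + 1 else v - 1) + 1
        else (if v % 2 = 0 then v + 1 else v - 1) - 1) = v
     split_ifs <;> omega,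
   fun p => by
     rcases p with ⟨v, hv⟩
     intro h
     have h1 : (if v % 2 = 0 then v + 1 else v - 1) = v := congrArg Fin.val h
     revert h1
     split_ifs <;> omega⟩

noncomputable def Ssum : (BD 4 →₀ ℤ) →ₗ[ℤ] ℤ := Finsupp.lsum ℤ fun _ => LinearMap.id

lemma Ssum_apply (v : BD 4 →₀ ℤ) : Ssum v = v.sum fun _ c => c := rfl

lemma Ssum_astw (v : BD 4 →₀ ℤ) (w : Equiv.Perm (Fin (2*4))) : Ssum (astw v w) = Ssum v := by
  rw [Ssum_apply, Ssum_apply, astw, Finsupp.sum_mapDomain_index (by simp) (by simp)]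

lemma Ssum_astMA (v : BD 4 →₀ ℤ) (z : MonoidAlgebra ℤ (Equiv.Perm (Fin (2*4)))) :
    Ssum (astMA v z) = (z.coeff.sum fun _ c => c) * Ssum v := by
  rw [astMA, map_finsuppSum, Finsupp.sum_mul]
  refine Finset.sum_congr rfl fun w _ => ?_
  dsimp only
  rw [map_smul, Ssum_astw, smul_eq_mul]

open Classical in
lemma Ssum_indSum (P : BD 4 → Prop) :
    Ssum (indSum ℤ P) = ((Finset.univ.filter P).card : ℤ) := by
  rw [indSum, map_sum, Finset.card_filter]
  push_cast
  refine Finset.sum_congr rfl fun D _ => ?_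
  split_ifs with h <;> simp [Ssum_apply, Finsupp.sum_single_index]

abbrev lam44 : ℕ → ℕ := fun i => if i < 2 then 4 else 0
abbrev lam62 : ℕ → ℕ := fun i => if i = 0 then 6 else if i = 1 then 2 else 0

lemma psum44 (i : ℕ) : psum lam44 i = if i = 0 then 0 else if i = 1 then 4 else 8 := by
  induction i with
  | zero => rfl
  | succ n ih =>
    rw [psum, Finset.sum_range_succ, ← psum, ih]
    rcases n with _ | _ | n <;> simp [lam44]

lemma psum62 (i : ℕ) : psum lam62 i = if i = 0 then 0 else if i = 1 then 6 else 8 := by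
  induction i with
  | zero => rfl
  | succ n ih =>
    rw [psum, Finset.sum_range_succ, ← psum, ih]
    rcases n with _ | _ | n <;> simp [lam62]

lemma pb44_iff (D : BD 4) : PreservesBlocks 4 lam44 D ↔
    ∀ p : Fin (2*4), ((p:ℕ) < 4 ↔ ((D.1 p : Fin (2*4)) : ℕ) < 4) := by
  constructor
  · intro h p
    have hp8 : (p:ℕ) < 8 := p.isLt
    constructor
    · intro hp
      have := h p 0 (by simp [psum44]) (by simp [psum44]; try omega)
      simpa [psum44] using this.2
    · intro hDp
      by_contra hp
      have := h p 1 (by simp [psum44]; try omega) (by simp [psum44]; try omega)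
      simp [psum44] at this
      omega
  · intro h p i h1 h2
    have hp8 : (p:ℕ) < 8 := p.isLt
    have hD8 : ((D.1 p : Fin (2*4)) : ℕ) < 8 := (D.1 p).isLt
    have hiff := h p
    rw [psum44] at h1
    rw [psum44] at h2
    rw [psum44, psum44]
    split_ifs at * <;> omega

lemma pb62_iff (D : BD 4) : PreservesBlocks 4 lam62 D ↔
    ∀ p : Fin (2*4), ((p:ℕ) < 6 ↔ ((D.1 p : Fin (2*4)) : ℕ) < 6) := by
  constructor
  · intro h p
    have hp8 : (p:ℕ) < 8 := p.isLt
    constructor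
    · intro hp
      have := h p 0 (by simp [psum62]) (by simp [psum62]; try omega)
      simpa [psum62] using this.2
    · intro hDp
      by_contra hp
      have := h p 1 (by simp [psum62]; try omega) (by simp [psum62]; try omega)
      simp [psum62] at this
      omega
  · intro h p i h1 h2
    have hp8 : (p:ℕ) < 8 := p.isLt
    have hD8 : ((D.1 p : Fin (2*4)) : ℕ) < 8 := (D.1 p).isLt
    have hiff := h p
    rw [psum62] at h1
    rw [psum62] at h2
    rw [psum62, psum62]
    split_ifs at * <;> omega
lemma four (f : Equiv.Perm (Fin (2*4))) (hinv : ∀ x, f (f x) = x)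
    (a b c d : Fin (2*4))
    (hdist : a ≠ b ∧ a ≠ c ∧ a ≠ d ∧ b ≠ c ∧ b ≠ d ∧ c ≠ d)
    (ha : f a = b ∨ f a = c ∨ f a = d)
    (hb : f b = a ∨ f b = c ∨ f b = d)
    (hc : f c = a ∨ f c = b ∨ f c = d)
    (hd : f d = a ∨ f d = b ∨ f d = c) :
    (f a = b ∧ f b = a ∧ f c = d ∧ f d = c) ∨
    (f a = c ∧ f c = a ∧ f b = d ∧ f d = b) ∨
    (f a = d ∧ f d = a ∧ f b = c ∧ f c = b) := by
  obtain ⟨d1, d2, d3, d4, d5, d6⟩ := hdist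
  have Ha := hinv a; have Hb := hinv b; have Hc := hinv c; have Hd := hinv d
  rcases ha with h1|h1|h1 <;> rcases hb with h2|h2|h2 <;>
    rcases hc with h3|h3|h3 <;> rcases hd with h4|h4|h4 <;> simp_all

def tbl44 : Fin 9 → Fin (2*4) → Fin (2*4) :=
 ![![1,0,3,2,5,4,7,6], ![1,0,3,2,6,7,4,5], ![1,0,3,2,7,6,5,4],
   ![2,3,0,1,5,4,7,6], ![2,3,0,1,6,7,4,5], ![2,3,0,1,7,6,5,4],
   ![3,2,1,0,5,4,7,6], ![3,2,1,0,6,7,4,5], ![3,2,1,0,7,6,5,4]]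

lemma class44 (f : Equiv.Perm (Fin (2*4))) (hinv : ∀ x, f (f x) = x)
    (hfpf : ∀ x, f x ≠ x)
    (hblk : ∀ p : Fin (2*4), ((p:ℕ) < 4 ↔ ((f p : Fin (2*4)) : ℕ) < 4)) :
    ∃ k : Fin 9, ∀ p, f p = tbl44 k p := by
  have hup : ∀ p : Fin (2*4), ¬((p:ℕ) < 4) → ¬(((f p : Fin (2*4)) : ℕ) < 4) :=
    fun p hp h => hp ((hblk p).mpr h)
  have ha : f 0 = 1 ∨ f 0 = 2 ∨ f 0 = 3 :=
    (by decide : ∀ x : Fin (2*4), (x:ℕ) < 4 → x ≠ 0 → (x = 1 ∨ x = 2 ∨ x = 3))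
      _ ((hblk 0).mp (by decide)) (hfpf 0)
  have hb : f 1 = 0 ∨ f 1 = 2 ∨ f 1 = 3 :=
    (by decide : ∀ x : Fin (2*4), (x:ℕ) < 4 → x ≠ 1 → (x = 0 ∨ x = 2 ∨ x = 3))
      _ ((hblk 1).mp (by decide)) (hfpf 1)
  have hc : f 2 = 0 ∨ f 2 = 1 ∨ f 2 = 3 :=
    (by decide : ∀ x : Fin (2*4), (x:ℕ) < 4 → x ≠ 2 → (x = 0 ∨ x = 1 ∨ x = 3))
      _ ((hblk 2).mp (by decide)) (hfpf 2)
  have hd : f 3 = 0 ∨ f 3 = 1 ∨ f 3 = 2 :=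
    (by decide : ∀ x : Fin (2*4), (x:ℕ) < 4 → x ≠ 3 → (x = 0 ∨ x = 1 ∨ x = 2))
      _ ((hblk 3).mp (by decide)) (hfpf 3)
  have he : f 4 = 5 ∨ f 4 = 6 ∨ f 4 = 7 :=
    (by decide : ∀ x : Fin (2*4), ¬((x:ℕ) < 4) → x ≠ 4 → (x = 5 ∨ x = 6 ∨ x = 7))
      _ (hup 4 (by decide)) (hfpf 4)
  have hf : f 5 = 4 ∨ f 5 = 6 ∨ f 5 = 7 :=
    (by decide : ∀ x : Fin (2*4), ¬((x:ℕ) < 4) → x ≠ 5 → (x = 4 ∨ x = 6 ∨ x = 7))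
      _ (hup 5 (by decide)) (hfpf 5)
  have hg : f 6 = 4 ∨ f 6 = 5 ∨ f 6 = 7 :=
    (by decide : ∀ x : Fin (2*4), ¬((x:ℕ) < 4) → x ≠ 6 → (x = 4 ∨ x = 5 ∨ x = 7))
      _ (hup 6 (by decide)) (hfpf 6)
  have hh : f 7 = 4 ∨ f 7 = 5 ∨ f 7 = 6 :=
    (by decide : ∀ x : Fin (2*4), ¬((x:ℕ) < 4) → x ≠ 7 → (x = 4 ∨ x = 5 ∨ x = 6))
      _ (hup 7 (by decide)) (hfpf 7)
  have F1 := four f hinv 0 1 2 3 (by decide) ha hb hc hd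
  have F2 := four f hinv 4 5 6 7 (by decide) he hf hg hh
  rcases F1 with ⟨e1,e2,e3,e4⟩|⟨e1,e2,e3,e4⟩|⟨e1,e2,e3,e4⟩ <;>
    rcases F2 with ⟨g1,g2,g3,g4⟩|⟨g1,g2,g3,g4⟩|⟨g1,g2,g3,g4⟩
  · exact ⟨0, by intro p; fin_cases p <;> assumption⟩
  · exact ⟨1, by intro p; fin_cases p <;> assumption⟩
  · exact ⟨2, by intro p; fin_cases p <;> assumption⟩
  · exact ⟨3, by intro p; fin_cases p <;> assumption⟩
  · exact ⟨4, by intro p; fin_cases p <;> assumption⟩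
  · exact ⟨5, by intro p; fin_cases p <;> assumption⟩
  · exact ⟨6, by intro p; fin_cases p <;> assumption⟩
  · exact ⟨7, by intro p; fin_cases p <;> assumption⟩
  · exact ⟨8, by intro p; fin_cases p <;> assumption⟩
def tbl62 : Fin 15 → Fin (2*4) → Fin (2*4) :=
 ![![1,0,3,2,5,4,7,6],
   ![1,0,4,5,2,3,7,6],
   ![1,0,5,4,3,2,7,6],
   ![2,3,0,1,5,4,7,6],
   ![2,4,0,5,1,3,7,6],
   ![2,5,0,4,3,1,7,6],
   ![3,2,1,0,5,4,7,6],
   ![3,4,5,0,1,2,7,6],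
   ![3,5,4,0,2,1,7,6],
   ![4,2,1,5,0,3,7,6],
   ![4,3,5,1,0,2,7,6],
   ![4,5,3,2,0,1,7,6],
   ![5,2,1,4,3,0,7,6],
   ![5,3,4,1,2,0,7,6],
   ![5,4,3,2,1,0,7,6]]

lemma class62 (f : Equiv.Perm (Fin (2*4))) (hinv : ∀ x, f (f x) = x)
    (hfpf : ∀ x, f x ≠ x)
    (hblk : ∀ p : Fin (2*4), ((p:ℕ) < 6 ↔ ((f p : Fin (2*4)) : ℕ) < 6)) :
    ∃ k : Fin 15, ∀ p, f p = tbl62 k p := by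
  have hIJ : ∀ x y : Fin (2*4), f x = y → ∀ z, z ≠ x → f z ≠ y :=
    fun x y h z hz he => hz (f.injective (he.trans h.symm))
  have hup : ∀ p : Fin (2*4), ¬((p:ℕ) < 6) → ¬(((f p : Fin (2*4)) : ℕ) < 6) :=
    fun p hp h => hp ((hblk p).mpr h)
  have h6 : f 6 = 7 :=
    (by decide : ∀ x : Fin (2*4), ¬((x:ℕ) < 6) → x ≠ 6 → x = 7) _ (hup 6 (by decide)) (hfpf 6)
  have h7 : f 7 = 6 := by rw [← h6]; exact hinv 6
  have ha : f 0 = 1 ∨ f 0 = 2 ∨ f 0 = 3 ∨ f 0 = 4 ∨ f 0 = 5 :=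
    (by decide : ∀ x : Fin (2*4), (x:ℕ) < 6 → x ≠ 0 → (x = 1 ∨ x = 2 ∨ x = 3 ∨ x = 4 ∨ x = 5))
      _ ((hblk 0).mp (by decide)) (hfpf 0)
  rcases ha with h0|h0|h0|h0|h0
  · have hr : f 1 = 0 := by rw [← h0]; exact hinv 0
    have hp2 : f 2 = 3 ∨ f 2 = 4 ∨ f 2 = 5 :=
      (by decide : ∀ x : Fin (2*4), (x:ℕ) < 6 → x ≠ 0 → x ≠ 1 → x ≠ 2 → (x = 3 ∨ x = 4 ∨ x = 5))
        _ ((hblk 2).mp (by decide)) (hIJ 1 0 hr 2 (by decide)) (hIJ 0 1 h0 2 (by decide)) (hfpf 2)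
    have hp3 : f 3 = 2 ∨ f 3 = 4 ∨ f 3 = 5 :=
      (by decide : ∀ x : Fin (2*4), (x:ℕ) < 6 → x ≠ 0 → x ≠ 1 → x ≠ 3 → (x = 2 ∨ x = 4 ∨ x = 5))
        _ ((hblk 3).mp (by decide)) (hIJ 1 0 hr 3 (by decide)) (hIJ 0 1 h0 3 (by decide)) (hfpf 3)
    have hp4 : f 4 = 2 ∨ f 4 = 3 ∨ f 4 = 5 :=
      (by decide : ∀ x : Fin (2*4), (x:ℕ) < 6 → x ≠ 0 → x ≠ 1 → x ≠ 4 → (x = 2 ∨ x = 3 ∨ x = 5))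
        _ ((hblk 4).mp (by decide)) (hIJ 1 0 hr 4 (by decide)) (hIJ 0 1 h0 4 (by decide)) (hfpf 4)
    have hp5 : f 5 = 2 ∨ f 5 = 3 ∨ f 5 = 4 :=
      (by decide : ∀ x : Fin (2*4), (x:ℕ) < 6 → x ≠ 0 → x ≠ 1 → x ≠ 5 → (x = 2 ∨ x = 3 ∨ x = 4))
        _ ((hblk 5).mp (by decide)) (hIJ 1 0 hr 5 (by decide)) (hIJ 0 1 h0 5 (by decide)) (hfpf 5)
    have F := four f hinv 2 3 4 5 (by decide) hp2 hp3 hp4 hp5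
    rcases F with ⟨e1,e2,e3,e4⟩|⟨e1,e2,e3,e4⟩|⟨e1,e2,e3,e4⟩
    · exact ⟨0, by intro p; fin_cases p <;> assumption⟩
    · exact ⟨1, by intro p; fin_cases p <;> assumption⟩
    · exact ⟨2, by intro p; fin_cases p <;> assumption⟩
  · have hr : f 2 = 0 := by rw [← h0]; exact hinv 0
    have hp1 : f 1 = 3 ∨ f 1 = 4 ∨ f 1 = 5 :=
      (by decide : ∀ x : Fin (2*4), (x:ℕ) < 6 → x ≠ 0 → x ≠ 2 → x ≠ 1 → (x = 3 ∨ x = 4 ∨ x = 5))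
        _ ((hblk 1).mp (by decide)) (hIJ 2 0 hr 1 (by decide)) (hIJ 0 2 h0 1 (by decide)) (hfpf 1)
    have hp3 : f 3 = 1 ∨ f 3 = 4 ∨ f 3 = 5 :=
      (by decide : ∀ x : Fin (2*4), (x:ℕ) < 6 → x ≠ 0 → x ≠ 2 → x ≠ 3 → (x = 1 ∨ x = 4 ∨ x = 5))
        _ ((hblk 3).mp (by decide)) (hIJ 2 0 hr 3 (by decide)) (hIJ 0 2 h0 3 (by decide)) (hfpf 3)
    have hp4 : f 4 = 1 ∨ f 4 = 3 ∨ f 4 = 5 :=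
      (by decide : ∀ x : Fin (2*4), (x:ℕ) < 6 → x ≠ 0 → x ≠ 2 → x ≠ 4 → (x = 1 ∨ x = 3 ∨ x = 5))
        _ ((hblk 4).mp (by decide)) (hIJ 2 0 hr 4 (by decide)) (hIJ 0 2 h0 4 (by decide)) (hfpf 4)
    have hp5 : f 5 = 1 ∨ f 5 = 3 ∨ f 5 = 4 :=
      (by decide : ∀ x : Fin (2*4), (x:ℕ) < 6 → x ≠ 0 → x ≠ 2 → x ≠ 5 → (x = 1 ∨ x = 3 ∨ x = 4))
        _ ((hblk 5).mp (by decide)) (hIJ 2 0 hr 5 (by decide)) (hIJ 0 2 h0 5 (by decide)) (hfpf 5)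
    have F := four f hinv 1 3 4 5 (by decide) hp1 hp3 hp4 hp5
    rcases F with ⟨e1,e2,e3,e4⟩|⟨e1,e2,e3,e4⟩|⟨e1,e2,e3,e4⟩
    · exact ⟨3, by intro p; fin_cases p <;> assumption⟩
    · exact ⟨4, by intro p; fin_cases p <;> assumption⟩
    · exact ⟨5, by intro p; fin_cases p <;> assumption⟩
  · have hr : f 3 = 0 := by rw [← h0]; exact hinv 0
    have hp1 : f 1 = 2 ∨ f 1 = 4 ∨ f 1 = 5 :=
      (by decide : ∀ x : Fin (2*4), (x:ℕ) < 6 → x ≠ 0 → x ≠ 3 → x ≠ 1 → (x = 2 ∨ x = 4 ∨ x = 5))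
        _ ((hblk 1).mp (by decide)) (hIJ 3 0 hr 1 (by decide)) (hIJ 0 3 h0 1 (by decide)) (hfpf 1)
    have hp2 : f 2 = 1 ∨ f 2 = 4 ∨ f 2 = 5 :=
      (by decide : ∀ x : Fin (2*4), (x:ℕ) < 6 → x ≠ 0 → x ≠ 3 → x ≠ 2 → (x = 1 ∨ x = 4 ∨ x = 5))
        _ ((hblk 2).mp (by decide)) (hIJ 3 0 hr 2 (by decide)) (hIJ 0 3 h0 2 (by decide)) (hfpf 2)
    have hp4 : f 4 = 1 ∨ f 4 = 2 ∨ f 4 = 5 :=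
      (by decide : ∀ x : Fin (2*4), (x:ℕ) < 6 → x ≠ 0 → x ≠ 3 → x ≠ 4 → (x = 1 ∨ x = 2 ∨ x = 5))
        _ ((hblk 4).mp (by decide)) (hIJ 3 0 hr 4 (by decide)) (hIJ 0 3 h0 4 (by decide)) (hfpf 4)
    have hp5 : f 5 = 1 ∨ f 5 = 2 ∨ f 5 = 4 :=
      (by decide : ∀ x : Fin (2*4), (x:ℕ) < 6 → x ≠ 0 → x ≠ 3 → x ≠ 5 → (x = 1 ∨ x = 2 ∨ x = 4))
        _ ((hblk 5).mp (by decide)) (hIJ 3 0 hr 5 (by decide)) (hIJ 0 3 h0 5 (by decide)) (hfpf 5)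
    have F := four f hinv 1 2 4 5 (by decide) hp1 hp2 hp4 hp5
    rcases F with ⟨e1,e2,e3,e4⟩|⟨e1,e2,e3,e4⟩|⟨e1,e2,e3,e4⟩
    · exact ⟨6, by intro p; fin_cases p <;> assumption⟩
    · exact ⟨7, by intro p; fin_cases p <;> assumption⟩
    · exact ⟨8, by intro p; fin_cases p <;> assumption⟩
  · have hr : f 4 = 0 := by rw [← h0]; exact hinv 0
    have hp1 : f 1 = 2 ∨ f 1 = 3 ∨ f 1 = 5 :=
      (by decide : ∀ x : Fin (2*4), (x:ℕ) < 6 → x ≠ 0 → x ≠ 4 → x ≠ 1 → (x = 2 ∨ x = 3 ∨ x = 5))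
        _ ((hblk 1).mp (by decide)) (hIJ 4 0 hr 1 (by decide)) (hIJ 0 4 h0 1 (by decide)) (hfpf 1)
    have hp2 : f 2 = 1 ∨ f 2 = 3 ∨ f 2 = 5 :=
      (by decide : ∀ x : Fin (2*4), (x:ℕ) < 6 → x ≠ 0 → x ≠ 4 → x ≠ 2 → (x = 1 ∨ x = 3 ∨ x = 5))
        _ ((hblk 2).mp (by decide)) (hIJ 4 0 hr 2 (by decide)) (hIJ 0 4 h0 2 (by decide)) (hfpf 2)
    have hp3 : f 3 = 1 ∨ f 3 = 2 ∨ f 3 = 5 :=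
      (by decide : ∀ x : Fin (2*4), (x:ℕ) < 6 → x ≠ 0 → x ≠ 4 → x ≠ 3 → (x = 1 ∨ x = 2 ∨ x = 5))
        _ ((hblk 3).mp (by decide)) (hIJ 4 0 hr 3 (by decide)) (hIJ 0 4 h0 3 (by decide)) (hfpf 3)
    have hp5 : f 5 = 1 ∨ f 5 = 2 ∨ f 5 = 3 :=
      (by decide : ∀ x : Fin (2*4), (x:ℕ) < 6 → x ≠ 0 → x ≠ 4 → x ≠ 5 → (x = 1 ∨ x = 2 ∨ x = 3))
        _ ((hblk 5).mp (by decide)) (hIJ 4 0 hr 5 (by decide)) (hIJ 0 4 h0 5 (by decide)) (hfpf 5)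
    have F := four f hinv 1 2 3 5 (by decide) hp1 hp2 hp3 hp5
    rcases F with ⟨e1,e2,e3,e4⟩|⟨e1,e2,e3,e4⟩|⟨e1,e2,e3,e4⟩
    · exact ⟨9, by intro p; fin_cases p <;> assumption⟩
    · exact ⟨10, by intro p; fin_cases p <;> assumption⟩
    · exact ⟨11, by intro p; fin_cases p <;> assumption⟩
  · have hr : f 5 = 0 := by rw [← h0]; exact hinv 0
    have hp1 : f 1 = 2 ∨ f 1 = 3 ∨ f 1 = 4 :=
      (by decide : ∀ x : Fin (2*4), (x:ℕ) < 6 → x ≠ 0 → x ≠ 5 → x ≠ 1 → (x = 2 ∨ x = 3 ∨ x = 4))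
        _ ((hblk 1).mp (by decide)) (hIJ 5 0 hr 1 (by decide)) (hIJ 0 5 h0 1 (by decide)) (hfpf 1)
    have hp2 : f 2 = 1 ∨ f 2 = 3 ∨ f 2 = 4 :=
      (by decide : ∀ x : Fin (2*4), (x:ℕ) < 6 → x ≠ 0 → x ≠ 5 → x ≠ 2 → (x = 1 ∨ x = 3 ∨ x = 4))
        _ ((hblk 2).mp (by decide)) (hIJ 5 0 hr 2 (by decide)) (hIJ 0 5 h0 2 (by decide)) (hfpf 2)
    have hp3 : f 3 = 1 ∨ f 3 = 2 ∨ f 3 = 4 :=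
      (by decide : ∀ x : Fin (2*4), (x:ℕ) < 6 → x ≠ 0 → x ≠ 5 → x ≠ 3 → (x = 1 ∨ x = 2 ∨ x = 4))
        _ ((hblk 3).mp (by decide)) (hIJ 5 0 hr 3 (by decide)) (hIJ 0 5 h0 3 (by decide)) (hfpf 3)
    have hp4 : f 4 = 1 ∨ f 4 = 2 ∨ f 4 = 3 :=
      (by decide : ∀ x : Fin (2*4), (x:ℕ) < 6 → x ≠ 0 → x ≠ 5 → x ≠ 4 → (x = 1 ∨ x = 2 ∨ x = 3))
        _ ((hblk 4).mp (by decide)) (hIJ 5 0 hr 4 (by decide)) (hIJ 0 5 h0 4 (by decide)) (hfpf 4)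
    have F := four f hinv 1 2 3 4 (by decide) hp1 hp2 hp3 hp4
    rcases F with ⟨e1,e2,e3,e4⟩|⟨e1,e2,e3,e4⟩|⟨e1,e2,e3,e4⟩
    · exact ⟨12, by intro p; fin_cases p <;> assumption⟩
    · exact ⟨13, by intro p; fin_cases p <;> assumption⟩
    · exact ⟨14, by intro p; fin_cases p <;> assumption⟩

def mkBD (t : Fin (2*4) → Fin (2*4)) (hinv : ∀ p, t (t p) = p) (hfpf : ∀ p, t p ≠ p) : BD 4 :=
  ⟨⟨t, t, hinv, hinv⟩,
   Equiv.ext fun p => by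
     rw [Equiv.Perm.mul_apply, Equiv.Perm.one_apply]; exact hinv p,
   fun p => hfpf p⟩

lemma t44_inv : ∀ (k : Fin 9) p, tbl44 k (tbl44 k p) = p := by decide
lemma t44_fpf : ∀ (k : Fin 9) p, tbl44 k p ≠ p := by decide
lemma t44_blk : ∀ (k : Fin 9) (p : Fin (2*4)),
    ((p:ℕ) < 4 ↔ ((tbl44 k p : Fin (2*4)):ℕ) < 4) := by decide
lemma t44_inj : ∀ k k' : Fin 9, tbl44 k 0 = tbl44 k' 0 → tbl44 k 4 = tbl44 k' 4 → k = k' := by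
  decide

lemma t62_inv : ∀ (k : Fin 15) p, tbl62 k (tbl62 k p) = p := by decide
lemma t62_fpf : ∀ (k : Fin 15) p, tbl62 k p ≠ p := by decide
lemma t62_blk : ∀ (k : Fin 15) (p : Fin (2*4)),
    ((p:ℕ) < 6 ↔ ((tbl62 k p : Fin (2*4)):ℕ) < 6) := by decide
lemma t62_inj : ∀ k k' : Fin 15, tbl62 k 0 = tbl62 k' 0 → tbl62 k 1 = tbl62 k' 1 →
    tbl62 k 2 = tbl62 k' 2 → k = k' := by decide

noncomputable def E44 (k : Fin 9) : {D : BD 4 // PreservesBlocks 4 lam44 D} :=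
  ⟨mkBD (tbl44 k) (t44_inv k) (t44_fpf k), (pb44_iff _).mpr (t44_blk k)⟩

noncomputable def E62 (k : Fin 15) : {D : BD 4 // PreservesBlocks 4 lam62 D} :=
  ⟨mkBD (tbl62 k) (t62_inv k) (t62_fpf k), (pb62_iff _).mpr (t62_blk k)⟩

lemma BD_inv (D : BD 4) : ∀ x, D.1 (D.1 x) = x := fun x => by
  have := congrArg (fun σ : Equiv.Perm (Fin (2*4)) => σ x) D.2.1
  simpa using this

lemma E44_bij : Function.Bijective E44 := by
  constructor
  · intro k k' h
    exact t44_inj k k' (congrArg (fun X => X.1.1 0) h) (congrArg (fun X => X.1.1 4) h)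
  · rintro ⟨D, hD⟩
    obtain ⟨k, hk⟩ := class44 D.1 (BD_inv D) D.2.2 ((pb44_iff D).mp hD)
    refine ⟨k, Subtype.ext (Subtype.ext (Equiv.ext fun p => (hk p).symm))⟩

lemma E62_bij : Function.Bijective E62 := by
  constructor
  · intro k k' h
    exact t62_inj k k' (congrArg (fun X => X.1.1 0) h) (congrArg (fun X => X.1.1 1) h)
      (congrArg (fun X => X.1.1 2) h)
  · rintro ⟨D, hD⟩
    obtain ⟨k, hk⟩ := class62 D.1 (BD_inv D) D.2.2 ((pb62_iff D).mp hD)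
    refine ⟨k, Subtype.ext (Subtype.ext (Equiv.ext fun p => (hk p).symm))⟩

open Classical in
lemma SsumX44 : Ssum (Xelt ℤ 4 (fun i => if i < 2 then 4 else 0)) = 9 := by
  have : Xelt ℤ 4 (fun i => if i < 2 then 4 else 0) = indSum ℤ (PreservesBlocks 4 lam44) := rfl
  rw [this, Ssum_indSum, ← Fintype.card_subtype, ← Fintype.card_of_bijective E44_bij,
    Fintype.card_fin]
  norm_num

open Classical in
lemma SsumX62 : Ssum (Xelt ℤ 4 (fun i => if i = 0 then 6 else if i = 1 then 2 else 0)) = 15 := by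
  have : Xelt ℤ 4 (fun i => if i = 0 then 6 else if i = 1 then 2 else 0)
      = indSum ℤ (PreservesBlocks 4 lam62) := rfl
  rw [this, Ssum_indSum, ← Fintype.card_subtype, ← Fintype.card_of_bijective E62_bij,
    Fintype.card_fin]
  norm_num

/-- For `n = 4`, the element `X_{(6,2)}` of `B_{4,ℤ}` does not lie in the
right `ℤ[S_8]`-submodule generated by `X_{(4,4)}`. -/
theorem X62_not_in_X44_module :
    ∀ z : MonoidAlgebra ℤ (Equiv.Perm (Fin (2*4))),
      astMA (Xelt ℤ 4 (fun i => if i < 2 then 4 else 0)) z ≠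
        Xelt ℤ 4 (fun i => if i = 0 then 6 else if i = 1 then 2 else 0) := by
  intro z h
  have h1 := congrArg (fun v => Ssum v) h
  simp only [Ssum_astMA, SsumX44, SsumX62] at h1
  set C := z.coeff.sum fun _ c => c with hC
  omega
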